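/- Let X consist of N i.i.d. Uniform[0,1] samples, ρ ∈ (0, 1/4), MinPts = ⌈ρN⌉, and β > 1. For any ε < (1/β)·ρ/2 and any δ > 0, there exists N_ε such that for all N > N_ε, with probability at least 1 - δ, X has no core points and DBSCAN returns zero clusters. -/

import Mathlib

open MeasureTheory Set

/-- The law of `N` i.i.d. Uniform[0,1] samples. -/
noncomputable def unifN (N : ℕ) : Measure (Fin N → ℝ) :=
  Measure.pi fun _ => volume.restrict (Set.Icc (0 : ℝ) 1)

section DBSCAN

variable {M : Type*} [MetricSpace M]

/-- `p` is a core point of dataset `X`: it belongs to `X` and its closed `ε`-ball contains at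
least `minPts` points of `X` (including itself). -/
def IsCore (X : Finset M) (ε : ℝ) (minPts : ℕ) (p : M) : Prop :=
  p ∈ X ∧ minPts ≤ {y : M | y ∈ X ∧ dist p y ≤ ε}.ncard

/-- `q` is density-reachable from `p`: there is a chain in `X` from `p` to `q` whose points
(except possibly the last) are core points, with consecutive distances at most `ε`. -/
def Reach (X : Finset M) (ε : ℝ) (minPts : ℕ) (p q : M) : Prop :=
  ∃ (t : ℕ) (c : Fin (t + 1) → M), c 0 = p ∧ c (Fin.last t) = q ∧ (∀ i, c i ∈ X) ∧
    ∀ i : Fin t, IsCore X ε minPts (c i.castSucc) ∧ dist (c i.castSucc) (c i.succ) ≤ ε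

/-- A DBSCAN cluster: the set of all points density-reachable from some core point. -/
def IsCluster (X : Finset M) (ε : ℝ) (minPts : ℕ) (c : Set M) : Prop :=
  ∃ p, IsCore X ε minPts p ∧ c = {q : M | Reach X ε minPts p q}

/-- The number of clusters DBSCAN produces on `X` with parameters `ε`, `minPts`. -/
noncomputable def numClusters (X : Finset M) (ε : ℝ) (minPts : ℕ) : ℕ :=
  Set.ncard {c : Set M | IsCluster X ε minPts c}

end DBSCAN

open ProbabilityTheory
open scoped ENNReal NNReal

instance : IsProbabilityMeasure (volume.restrict (Set.Icc (0:ℝ) 1)) :=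
  ⟨by simp [Real.volume_Icc]⟩

instance (N : ℕ) : IsProbabilityMeasure (unifN N) := by
  unfold unifN; infer_instance

lemma unif_eval (N : ℕ) (j : Fin N) (s : Set ℝ) (hs : MeasurableSet s) :
    unifN N ((fun x => x j) ⁻¹' s) = volume.restrict (Set.Icc (0:ℝ) 1) s := by
  classical
  have h : (fun x : Fin N → ℝ => x j) ⁻¹' s
      = Set.pi Set.univ (fun k => if k = j then s else Set.univ) := by
    ext x
    simp only [Set.mem_preimage, Set.mem_pi, Set.mem_univ, true_implies]
    constructor
    · intro h k; by_cases hk : k = j <;> simp [hk, h]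
    · intro h; simpa using h j
  rw [h, unifN, Measure.pi_pi]
  simp only [apply_ite (volume.restrict (Set.Icc (0:ℝ) 1))]
  simp [Finset.prod_ite_eq', Real.volume_Icc]

lemma indep_eval (N : ℕ) {i j : Fin N} (hij : i ≠ j) :
    IndepFun (fun x : Fin N → ℝ => x i) (fun x : Fin N → ℝ => x j) (unifN N) := by
  classical
  rw [indepFun_iff_measure_inter_preimage_eq_mul]
  intro s t hs ht
  rw [unif_eval N i s hs, unif_eval N j t ht]
  have h : (fun x : Fin N → ℝ => x i) ⁻¹' s ∩ (fun x : Fin N → ℝ => x j) ⁻¹' t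
      = Set.pi Set.univ (fun k => if k = i then s else if k = j then t else Set.univ) := by
    ext x
    simp only [Set.mem_inter_iff, Set.mem_preimage, Set.mem_pi, Set.mem_univ, true_implies]
    constructor
    · rintro ⟨h1, h2⟩ k
      by_cases hk : k = i
      · simp [hk, h1]
      · by_cases hk' : k = j <;> simp [hk, hk', hij.symm, h2]
    · intro h
      constructor
      · simpa using h i
      · have := h j; simpa [hij.symm] using this
  rw [h, unifN, Measure.pi_pi]
  set μ0 := volume.restrict (Set.Icc (0:ℝ) 1)
  have h1 : μ0 Set.univ = 1 := by simp [μ0, Real.volume_Icc]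
  simp only [apply_ite μ0, h1]
  rw [← Finset.mul_prod_erase Finset.univ _ (Finset.mem_univ i)]
  rw [if_pos rfl]
  congr 1
  rw [← Finset.mul_prod_erase _ _
    (Finset.mem_erase.mpr ⟨hij.symm, Finset.mem_univ j⟩)]
  rw [if_neg hij.symm, if_pos rfl]
  have : ∀ k ∈ (Finset.univ.erase i).erase j,
      (if k = i then μ0 s else if k = j then μ0 t else 1) = 1 := by
    intro k hk
    simp only [Finset.mem_erase] at hk
    rw [if_neg hk.2.1, if_neg hk.1]
  rw [Finset.prod_congr rfl this]
  simp

lemma count_bound (N : ℕ) (hN : 0 < N) (I : Set ℝ) [DecidablePred (· ∈ I)]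
    (hI : MeasurableSet I) (q g : ℝ)
    (hq0 : 0 ≤ q) (hg : 0 < g)
    (hIq : volume.restrict (Set.Icc (0:ℝ) 1) I ≤ ENNReal.ofReal q) :
    unifN N {x | (q + g) * N ≤ ((Finset.univ.filter (fun j => x j ∈ I)).card : ℝ)}
      ≤ ENNReal.ofReal (1 / (4 * g^2 * N)) := by
  classical
  set μ := unifN N with hμ
  set X : Fin N → (Fin N → ℝ) → ℝ :=
    fun j => Set.indicator ((fun x : Fin N → ℝ => x j) ⁻¹' I) (fun _ => (1:ℝ)) with hX
  have hpre : ∀ j : Fin N, MeasurableSet ((fun x : Fin N → ℝ => x j) ⁻¹' I) :=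
    fun j => (measurable_pi_apply j) hI
  have hmeas : ∀ j, Measurable (X j) := fun j => measurable_const.indicator (hpre j)
  have hmemp : ∀ j, MemLp (X j) 2 μ :=
    fun j => memLp_indicator_const 2 (hpre j) 1 (Or.inr (measure_ne_top _ _))
  have hcomp : ∀ j : Fin N,
      X j = (Set.indicator I fun _ => (1:ℝ)) ∘ (fun x : Fin N → ℝ => x j) := by
    intro j; funext x; simp [hX, Set.indicator_apply]
  set qI : ℝ := (volume.restrict (Set.Icc (0:ℝ) 1) I).toReal with hqI
  have hqIq : qI ≤ q := ENNReal.toReal_le_of_le_ofReal hq0 hIq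
  have hint : ∀ j, μ[X j] = qI := by
    intro j
    rw [hX]
    rw [integral_indicator_const (1:ℝ) (hpre j)]
    rw [hμ, measureReal_def, unif_eval N j I hI]
    simp [hqI]
  set S : (Fin N → ℝ) → ℝ := ∑ j, X j with hS
  have hSmem : MemLp S 2 μ := memLp_finset_sum' _ (fun j _ => hmemp j)
  have hES : μ[S] = N * qI := by
    rw [hS]
    simp only [Finset.sum_apply]
    rw [integral_finset_sum _ (fun j _ => (hmemp j).integrable one_le_two)]
    simp [hint, mul_comm]
  have hvar : variance S μ ≤ N * (1/4) := by
    have hpair : Set.Pairwise ↑(Finset.univ : Finset (Fin N))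
        fun i j => IndepFun (X i) (X j) μ := by
      intro i _ j _ hij
      rw [hcomp i, hcomp j]
      exact (indep_eval N hij).comp (measurable_const.indicator hI)
        (measurable_const.indicator hI)
    rw [hS, IndepFun.variance_sum (fun j _ => hmemp j) hpair]
    have : ∀ j : Fin N, variance (X j) μ ≤ 1/4 := by
      intro j
      have hb : ∀ᵐ x ∂μ, X j x ∈ Set.Icc (0:ℝ) 1 := by
        refine ae_of_all _ fun x => ?_
        simp only [hX, Set.indicator_apply]
        split <;> norm_num
      have := variance_le_sq_of_bounded hb (hmeas j).aemeasurable
      norm_num at this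
      linarith
    calc ∑ j : Fin N, variance (X j) μ ≤ ∑ _j : Fin N, (1/4 : ℝ) :=
          Finset.sum_le_sum (fun j _ => this j)
      _ = N * (1/4) := by simp [mul_comm]
  have hc : (0:ℝ) < g * N := by positivity
  have cheb := meas_ge_le_variance_div_sq hSmem hc
  have hsub : {x : Fin N → ℝ | (q + g) * N ≤ ((Finset.univ.filter (fun j => x j ∈ I)).card : ℝ)}
      ⊆ {x | g * N ≤ |S x - μ[S]|} := by
    intro x hx
    simp only [Set.mem_setOf_eq] at hx ⊢
    have hcount : ((Finset.univ.filter (fun j => x j ∈ I)).card : ℝ) = S x := by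
      rw [hS]
      simp only [Finset.sum_apply, hX, Set.indicator_apply, Set.mem_preimage]
      simp [Finset.sum_boole, Finset.filter_congr_decidable]
    rw [hcount] at hx
    have hN0 : (0:ℝ) ≤ (N:ℝ) := Nat.cast_nonneg N
    have : g * N ≤ S x - μ[S] := by
      rw [hES]; nlinarith [hqIq]
    exact this.trans (le_abs_self _)
  calc μ _ ≤ μ {x | g * N ≤ |S x - μ[S]|} := measure_mono hsub
    _ ≤ ENNReal.ofReal (variance S μ / (g * N)^2) := cheb
    _ ≤ ENNReal.ofReal (1 / (4 * g^2 * N)) := by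
        apply ENNReal.ofReal_le_ofReal
        have h2 : (0:ℝ) < (g*N)^2 := by positivity
        have hle : variance S μ / (g*N)^2 ≤ ((N:ℝ) * (1/4)) / (g*N)^2 := by gcongr
        refine hle.trans (le_of_eq ?_)
        have hNne : (N:ℝ) ≠ 0 := Nat.cast_ne_zero.mpr hN.ne'
        field_simp

lemma numClusters_eq_zero' {M : Type*} [MetricSpace M] {X : Finset M} {ε : ℝ} {mp : ℕ}
    (h : ∀ p, ¬ IsCore X ε mp p) : numClusters X ε mp = 0 := by
  have he : {c : Set M | IsCluster X ε mp c} = ∅ := by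
    ext c
    simp only [Set.mem_setOf_eq, Set.mem_empty_iff_false, iff_false]
    rintro ⟨p, hp, -⟩
    exact h p hp
  rw [numClusters, he, Set.ncard_empty]

lemma core_to_count {N : ℕ} (x : Fin N → ℝ) {ε : ℝ} {m : ℕ} {p : ℝ}
    [DecidablePred fun j : Fin N => dist p (x j) ≤ ε]
    (hc : IsCore (Finset.image x Finset.univ) ε m p) :
    m ≤ (Finset.univ.filter fun j : Fin N => dist p (x j) ≤ ε).card := by
  obtain ⟨hp, hcard⟩ := hc
  refine hcard.trans ?_
  have h1 : {y : ℝ | y ∈ Finset.image x Finset.univ ∧ dist p y ≤ ε}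
      ⊆ x '' {j | dist p (x j) ≤ ε} := by
    rintro y ⟨hy, hd⟩
    simp only [Finset.mem_image, Finset.mem_univ, true_and] at hy
    obtain ⟨j, rfl⟩ := hy
    exact ⟨j, hd, rfl⟩
  have h2 : {y : ℝ | y ∈ Finset.image x Finset.univ ∧ dist p y ≤ ε}.ncard
      ≤ (x '' {j | dist p (x j) ≤ ε}).ncard :=
    Set.ncard_le_ncard h1 ((Set.toFinite _).image x)
  have h3 : (x '' {j | dist p (x j) ≤ ε}).ncard ≤ {j | dist p (x j) ≤ ε}.ncard :=
    Set.ncard_image_le (Set.toFinite _)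
  have h4 : {j | dist p (x j) ≤ ε}
      = ↑(Finset.univ.filter fun j : Fin N => dist p (x j) ≤ ε) := by
    ext j; simp
  calc _ ≤ _ := h2
    _ ≤ _ := h3
    _ = _ := by rw [h4, Set.ncard_coe_finset]


theorem dbscan_zero_clusters_whp (ρ : ℝ) (hρ : ρ ∈ Set.Ioo (0 : ℝ) (1/4))
    (β : ℝ) (hβ : 1 < β) (ε : ℝ) (hε0 : 0 < ε) (hε : ε < (1/β) * ρ / 2) (δ : ℝ) (hδ : 0 < δ) :
    ∃ N₀ : ℕ, ∀ N : ℕ, N₀ < N →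
      ENNReal.ofReal (1 - δ) ≤
        unifN N {x : Fin N → ℝ |
          (∀ p, ¬ IsCore (Finset.image x Finset.univ) ε ⌈ρ * N⌉₊ p) ∧
          numClusters (Finset.image x Finset.univ) ε ⌈ρ * N⌉₊ = 0} := by
  classical
  obtain ⟨hρ0, hρ4⟩ := hρ
  have hβ0 : (0:ℝ) < β := lt_trans one_pos hβ
  have h1β : 1/β < 1 := by rw [div_lt_one hβ0]; exact hβ
  have h2ε : 2 * ε < ρ := by nlinarith
  set g : ℝ := (ρ - 2*ε)/2 with hg
  have hg0 : 0 < g := by rw [hg]; linarith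
  set q : ℝ := g + 2*ε with hq
  have hq0 : 0 ≤ q := by rw [hq]; linarith
  have hρqg : ρ = q + g := by rw [hq, hg]; ring
  set K : ℕ := ⌈1/g⌉₊ with hK
  refine ⟨max 1 ⌈((K:ℝ)+1) / (4*g^2*δ)⌉₊, fun N hN => ?_⟩
  have hN1 : 0 < N := lt_of_lt_of_le (lt_of_lt_of_le one_pos (le_max_left _ _)) hN.le
  have hNδ : ((K:ℝ)+1) / (4*g^2*δ) < N := by
    have h1 : (⌈((K:ℝ)+1) / (4*g^2*δ)⌉₊ : ℝ) < N := by
      exact_mod_cast lt_of_le_of_lt (le_max_right 1 _) hN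
    exact lt_of_le_of_lt (Nat.le_ceil _) h1
  have hδN : ((K:ℝ)+1) * (1/(4*g^2*N)) ≤ δ := by
    rw [div_lt_iff₀ (by positivity)] at hNδ
    rw [mul_one_div, div_le_iff₀ (by positivity : (0:ℝ) < 4*g^2*(N:ℝ))]
    nlinarith
  set μ := unifN N with hμ
  set m := ⌈ρ * N⌉₊ with hm
  set good := {x : Fin N → ℝ |
      (∀ p, ¬ IsCore (Finset.image x Finset.univ) ε m p) ∧
      numClusters (Finset.image x Finset.univ) ε m = 0} with hgood
  set B : Set (Fin N → ℝ) := Set.pi Set.univ (fun _ : Fin N => Set.Icc (0:ℝ) 1) with hB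
  have hBmeas : MeasurableSet B := MeasurableSet.univ_pi fun _ => measurableSet_Icc
  have hBone : μ B = 1 := by
    rw [hμ, hB, unifN, Measure.pi_pi]
    simp [Measure.restrict_apply, measurableSet_Icc, Real.volume_Icc]
  have hBc : μ Bᶜ = 0 := by
    rw [measure_compl hBmeas (measure_ne_top _ _), hBone, measure_univ, tsub_self]
  set I : ℕ → Set ℝ := fun k => Set.Icc ((k:ℝ)*g - ε) ((k:ℝ)*g + g + ε) with hI
  set A : ℕ → Set (Fin N → ℝ) := fun k =>
    {x | (q+g)*N ≤ ((Finset.univ.filter fun j => x j ∈ I k).card : ℝ)} with hA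
  have hAk : ∀ k, μ (A k) ≤ ENNReal.ofReal (1/(4*g^2*N)) := by
    intro k
    refine count_bound N hN1 (I k) measurableSet_Icc q g hq0 hg0 ?_
    rw [Measure.restrict_apply measurableSet_Icc]
    refine le_trans (measure_mono Set.inter_subset_left) ?_
    rw [Real.volume_Icc]
    exact ENNReal.ofReal_le_ofReal (le_of_eq (by rw [hq]; ring))
  have hsub : goodᶜ ⊆ Bᶜ ∪ ⋃ k ∈ Finset.range (K+1), A k := by
    intro x hx
    by_cases hxB : x ∈ B
    · right
      have hcore : ∃ p, IsCore (Finset.image x Finset.univ) ε m p := by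
        by_contra h
        push_neg at h
        exact hx ⟨h, numClusters_eq_zero' h⟩
      obtain ⟨p, hp⟩ := hcore
      have hpI : p ∈ Set.Icc (0:ℝ) 1 := by
        obtain ⟨i₀, -, rfl⟩ := Finset.mem_image.mp hp.1
        exact hxB i₀ (Set.mem_univ _)
      set k : ℕ := ⌊p/g⌋₊ with hk
      have hkK : k ≤ K := by
        rw [hk, hK]
        exact le_trans (Nat.floor_le_floor (div_le_div_of_nonneg_right hpI.2 hg0.le))
          (Nat.floor_le_ceil _)
      have hkg1 : (k:ℝ)*g ≤ p := by
        rw [← le_div_iff₀ hg0]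
        exact Nat.floor_le (div_nonneg hpI.1 hg0.le)
      have hkg2 : p ≤ ((k:ℝ)+1)*g := by
        rw [← div_le_iff₀ hg0]
        exact_mod_cast (Nat.lt_floor_add_one (p/g)).le
      have hmemf : (Finset.univ.filter fun j : Fin N => dist p (x j) ≤ ε)
          ⊆ (Finset.univ.filter fun j => x j ∈ I k) := by
        intro j hj
        simp only [Finset.mem_filter, Finset.mem_univ, true_and] at hj ⊢
        rw [Real.dist_eq, abs_le] at hj
        simp only [hI, Set.mem_Icc]
        constructor
        · linarith [hj.1, hj.2, hkg1, hkg2]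
        · linarith [hj.1, hj.2, hkg1, hkg2]
      refine Set.mem_biUnion (Finset.mem_coe.mpr (Finset.mem_range.mpr (Nat.lt_succ_of_le hkK))) ?_
      rw [hA]
      show (q+g)*N ≤ ((Finset.univ.filter fun j => x j ∈ I k).card : ℝ)
      have hc1 : ρ * N ≤ (m:ℝ) := Nat.le_ceil _
      have hc2 : m ≤ (Finset.univ.filter fun j : Fin N => dist p (x j) ≤ ε).card :=
        core_to_count x hp
      have hc3 := Finset.card_le_card hmemf
      rw [← hρqg]
      calc ρ * N ≤ (m:ℝ) := hc1
        _ ≤ _ := by exact_mod_cast le_trans hc2 hc3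
    · left; exact hxB
  have hbad : μ goodᶜ ≤ ENNReal.ofReal δ := by
    calc μ goodᶜ ≤ μ (Bᶜ ∪ ⋃ k ∈ Finset.range (K+1), A k) := measure_mono hsub
      _ ≤ μ Bᶜ + μ (⋃ k ∈ Finset.range (K+1), A k) := measure_union_le _ _
      _ ≤ 0 + ∑ k ∈ Finset.range (K+1), μ (A k) := by
          exact add_le_add hBc.le (measure_biUnion_finset_le _ _)
      _ ≤ ∑ _k ∈ Finset.range (K+1), ENNReal.ofReal (1/(4*g^2*N)) := by
          rw [zero_add]
          exact Finset.sum_le_sum fun k _ => hAk k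
      _ = (↑(K+1)) * ENNReal.ofReal (1/(4*g^2*N)) := by
          rw [Finset.sum_const, Finset.card_range, nsmul_eq_mul]
      _ ≤ ENNReal.ofReal δ := by
          have hcast : ((K+1 : ℕ) : ℝ≥0∞) = ENNReal.ofReal ((K:ℝ)+1) := by
            rw [← ENNReal.ofReal_natCast (K+1)]
            push_cast
            ring_nf
          rw [hcast, ← ENNReal.ofReal_mul (by positivity)]
          exact ENNReal.ofReal_le_ofReal hδN
  have huniv : (1:ℝ≥0∞) ≤ μ good + μ goodᶜ := by
    calc (1:ℝ≥0∞) = μ Set.univ := (measure_univ).symm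
      _ = μ (good ∪ goodᶜ) := by rw [Set.union_compl_self]
      _ ≤ μ good + μ goodᶜ := measure_union_le _ _
  calc ENNReal.ofReal (1-δ) ≤ 1 - ENNReal.ofReal δ := by
        rw [ENNReal.ofReal_sub _ hδ.le, ENNReal.ofReal_one]
    _ ≤ μ good := by
        rw [tsub_le_iff_right]
        calc (1:ℝ≥0∞) ≤ μ good + μ goodᶜ := huniv
          _ ≤ μ good + ENNReal.ofReal δ := add_le_add le_rfl hbad
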